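/- Let T be a bounded operator on a complex Hilbert space H with Moore–Penrose inverse T†. Then the Moore–Penrose inverse of |T| is |(T†)^*|, and the Moore–Penrose inverse of |T^*| is |T†| (i.e. |(T†)^*| satisfies the four Penrose equations for |T|, and |T†| satisfies them for |T^*|). -/

import Mathlib

open ContinuousLinearMap

variable {H : Type*} [NormedAddCommGroup H] [InnerProductSpace ℂ H] [CompleteSpace H]

/-- The absolute value `|T| = (T^*T)^(1/2)` of a bounded operator on a complex
Hilbert space, defined via the continuous functional calculus. -/
noncomputable def absOp (T : H →L[ℂ] H) : H →L[ℂ] H :=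
  cfc Real.sqrt (adjoint T * T)

/-- The orthogonal projection of `H` onto the closure of the range of `T`,
regarded as an operator on `H`. -/
noncomputable def rangeProjOp (T : H →L[ℂ] H) : H →L[ℂ] H :=
  (LinearMap.range (T : H →ₗ[ℂ] H)).topologicalClosure.subtypeL ∘L
    Submodule.orthogonalProjectionOnto (LinearMap.range (T : H →ₗ[ℂ] H)).topologicalClosure

/-- `U` is a partial isometry: `U^*U` is an orthogonal projection
(a self-adjoint idempotent). -/
def IsPartialIsometryOp (U : H →L[ℂ] H) : Prop :=
  IsSelfAdjoint (adjoint U * U) ∧ (adjoint U * U) * (adjoint U * U) = adjoint U * U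

/-- `T = U|T|` is the polar decomposition of `T`: `U` is a partial isometry and
`U^*U` is the orthogonal projection onto the closure of the range of `T^*`. -/
def IsPolarDecompositionOp (T U : H →L[ℂ] H) : Prop :=
  T = U * absOp T ∧ IsPartialIsometryOp U ∧ adjoint U * U = rangeProjOp (adjoint T)

/-- `X` is the Moore--Penrose inverse of `T`: the four Penrose equations hold. -/
def IsMoorePenroseInv (T X : H →L[ℂ] H) : Prop :=
  T * X * T = T ∧ X * T * X = X ∧ IsSelfAdjoint (T * X) ∧ IsSelfAdjoint (X * T)

/-- If `b` commutes with a self-adjoint operator `a`, then it commutes with `cfc f a`. -/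
lemma commute_cfc' (a b : H →L[ℂ] H) (ha : IsSelfAdjoint a) (hc : Commute b a) (f : ℝ → ℝ) :
    Commute b (cfc f a) := by
  by_cases hf : ContinuousOn f (spectrum ℝ a)
  · rw [cfc_apply f a ha hf]
    suffices hall : ∀ g : C(spectrum ℝ a, ℝ), Commute b (cfcHom ha g) from hall _
    intro g
    have hgen : (cfcHom (R := ℝ) ha)
        ((Polynomial.toContinuousMapOnAlgHom (spectrum ℝ a)) Polynomial.X) = a := by
      have h := cfcHom_id (R := ℝ) ha
      convert h using 2
      ext x
      simp
    have key : ∀ g ∈ polynomialFunctions (spectrum ℝ a), Commute b (cfcHom (R := ℝ) ha g) := by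
      intro g hg
      rw [polynomialFunctions.eq_adjoin_X] at hg
      induction hg using Algebra.adjoin_induction with
      | mem x hx =>
        rw [Set.mem_singleton_iff] at hx
        subst hx
        rw [hgen]
        exact hc
      | algebraMap r =>
        rw [AlgHomClass.commutes]
        exact Algebra.commute_algebraMap_right r b
      | add x y _ _ hx hy => rw [map_add]; exact hx.add_right hy
      | mul x y _ _ hx hy => rw [map_mul]; exact hx.mul_right hy
    have hS : IsClosed {g : C(spectrum ℝ a, ℝ) | Commute b (cfcHom (R := ℝ) ha g)} := by
      have heq : {g : C(spectrum ℝ a, ℝ) | Commute b (cfcHom (R := ℝ) ha g)} =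
          {g | b * cfcHom (R := ℝ) ha g = cfcHom (R := ℝ) ha g * b} := rfl
      rw [heq]
      have hcont : Continuous (cfcHom (R := ℝ) ha : C(spectrum ℝ a, ℝ) → H →L[ℂ] H) :=
        (cfcHom_isClosedEmbedding ha).continuous
      exact isClosed_eq (by fun_prop) (by fun_prop)
    have hdense :
        closure ((polynomialFunctions (spectrum ℝ a) : Set C(↑(spectrum ℝ a), ℝ))) = Set.univ := by
      have h1 := congrArg (SetLike.coe) (polynomialFunctions.topologicalClosure (spectrum ℝ a))
      rw [Subalgebra.topologicalClosure_coe] at h1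
      simpa using h1
    have hmem : g ∈ closure ((polynomialFunctions (spectrum ℝ a) : Set C(↑(spectrum ℝ a), ℝ))) := by
      rw [hdense]; trivial
    exact closure_minimal key hS hmem
  · rw [cfc_apply_of_not_continuousOn a hf]
    exact Commute.zero_right b

lemma absOp_nonneg (T : H →L[ℂ] H) : 0 ≤ absOp T :=
  cfc_nonneg fun x _ => Real.sqrt_nonneg x

lemma absOp_mul_self (T : H →L[ℂ] H) : absOp T * absOp T = adjoint T * T := by
  have ha : IsSelfAdjoint (adjoint T * T) := IsSelfAdjoint.star_mul_self T
  rw [absOp, ← cfc_mul _ _ _ (by fun_prop) (by fun_prop)]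
  conv_rhs => rw [← cfc_id ℝ (adjoint T * T)]
  refine cfc_congr fun x hx => ?_
  have hx' : 0 ≤ x := spectrum_nonneg_of_nonneg (star_mul_self_nonneg T) hx
  simp [Real.mul_self_sqrt hx']

lemma commute_absOp (T b : H →L[ℂ] H) (h : Commute b (adjoint T * T)) :
    Commute b (absOp T) :=
  commute_cfc' _ b (IsSelfAdjoint.star_mul_self T) h Real.sqrt

/-- The square root (via `cfc`) of `a * a` is `a`, for nonnegative `a`. -/
lemma sqrtOp_mul_self (a : H →L[ℂ] H) (ha : 0 ≤ a) : cfc Real.sqrt (a * a) = a := by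
  have hsa : IsSelfAdjoint a := ha.isSelfAdjoint
  have h1 : a * a = cfc (fun x : ℝ => x * x) a := by
    rw [cfc_mul _ _ a (by fun_prop) (by fun_prop), cfc_id' ℝ a]
  rw [h1, ← cfc_comp Real.sqrt (fun x : ℝ => x * x) a hsa (by fun_prop) (by fun_prop)]
  conv_rhs => rw [← cfc_id ℝ a]
  refine cfc_congr fun x hx => ?_
  have hx' : 0 ≤ x := spectrum_nonneg_of_nonneg ha hx
  simp [Function.comp, Real.sqrt_mul_self hx']

/-- Two nonnegative operators with equal squares are equal. -/
lemma nonneg_sq_eq (a b : H →L[ℂ] H) (ha : 0 ≤ a) (hb : 0 ≤ b) (h : a * a = b * b) :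
    a = b := by
  rw [← sqrtOp_mul_self a ha, h, sqrtOp_mul_self b hb]

/-- The product of two commuting nonnegative operators is nonnegative. -/
lemma mul_nonneg_of_commute (a b : H →L[ℂ] H) (ha : 0 ≤ a) (hb : 0 ≤ b)
    (h : Commute a b) : 0 ≤ a * b := by
  have hsa : IsSelfAdjoint a := ha.isSelfAdjoint
  set s : H →L[ℂ] H := cfc Real.sqrt a with hs
  have hss : s * s = a := by
    rw [hs, ← cfc_mul _ _ _ (by fun_prop) (by fun_prop)]
    conv_rhs => rw [← cfc_id ℝ a]
    refine cfc_congr fun x hx => ?_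
    have hx' : 0 ≤ x := spectrum_nonneg_of_nonneg ha hx
    simp [Real.mul_self_sqrt hx']
  have hsnn : 0 ≤ s := cfc_nonneg fun x _ => Real.sqrt_nonneg x
  have hcsb : Commute b s := commute_cfc' a b hsa h.symm Real.sqrt
  have key : a * b = star s * b * s := by
    rw [hsnn.isSelfAdjoint.star_eq, ← hss, mul_assoc, mul_assoc, hcsb.eq, ← mul_assoc]
  rw [key]
  exact star_left_conjugate_nonneg hb s

lemma mp_adjoint (T X : H →L[ℂ] H) (hX : IsMoorePenroseInv T X) :
    IsMoorePenroseInv (adjoint T) (adjoint X) := by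
  obtain ⟨h1, h2, h3, h4⟩ := hX
  have star3 : ∀ a b c : H →L[ℂ] H, adjoint a * adjoint b * adjoint c = adjoint (c * b * a) := by
    intro a b c
    simp only [← star_eq_adjoint, star_mul, mul_assoc]
  refine ⟨?_, ?_, ?_, ?_⟩
  · rw [star3, h1]
  · rw [star3, h2]
  · have e : adjoint T * adjoint X = star (X * T) := by
      simp only [← star_eq_adjoint, star_mul]
    rw [e, h4.star_eq]
    exact h4
  · have e : adjoint X * adjoint T = star (T * X) := by
      simp only [← star_eq_adjoint, star_mul]
    rw [e, h3.star_eq]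
    exact h3

lemma mp_abs (T X : H →L[ℂ] H) (hX : IsMoorePenroseInv T X) :
    IsMoorePenroseInv (absOp T) (absOp (adjoint X)) := by
  obtain ⟨h1, h2, h3, h4⟩ := hX
  set A : H →L[ℂ] H := absOp T with hAdef
  set B : H →L[ℂ] H := absOp (adjoint X) with hBdef
  have hTX_star : adjoint X * adjoint T = T * X := by
    rw [← h3.star_eq]
    simp only [← star_eq_adjoint, star_mul]
  have hXT_star : adjoint T * adjoint X = X * T := by
    rw [← h4.star_eq]
    simp only [← star_eq_adjoint, star_mul]
  have hA2 : A * A = adjoint T * T := absOp_mul_self T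
  have hB2 : B * B = X * adjoint X := by
    rw [hBdef, absOp_mul_self, adjoint_adjoint]
  have hQsa : IsSelfAdjoint (X * T) := h4
  have hsaTT : IsSelfAdjoint (adjoint T * T) := IsSelfAdjoint.star_mul_self T
  have hsaXX : IsSelfAdjoint (X * adjoint X) := by
    have h := IsSelfAdjoint.mul_star_self X
    rwa [star_eq_adjoint] at h
  have hQidem : (X * T) * (X * T) = X * T := by
    calc (X * T) * (X * T) = (X * T * X) * T := by simp only [mul_assoc]
    _ = X * T := by rw [h2]
  have hQnn : 0 ≤ X * T := by
    have e : X * T = star (X * T) * (X * T) := by rw [hQsa.star_eq, hQidem]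
    rw [e]
    exact star_mul_self_nonneg (X * T)
  have hAnn : 0 ≤ A := absOp_nonneg T
  have hBnn : 0 ≤ B := absOp_nonneg (adjoint X)
  -- squares multiply to X * T
  have hA2B2 : (adjoint T * T) * (X * adjoint X) = X * T := by
    calc (adjoint T * T) * (X * adjoint X)
        = adjoint T * ((T * X) * adjoint X) := by simp only [mul_assoc]
    _ = adjoint T * ((adjoint X * adjoint T) * adjoint X) := by rw [hTX_star]
    _ = (adjoint T * adjoint X) * (adjoint T * adjoint X) := by simp only [mul_assoc]
    _ = (X * T) * (X * T) := by rw [hXT_star]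
    _ = X * T := hQidem
  have hB2A2 : (X * adjoint X) * (adjoint T * T) = X * T := by
    calc (X * adjoint X) * (adjoint T * T)
        = X * ((adjoint X * adjoint T) * T) := by simp only [mul_assoc]
    _ = X * ((T * X) * T) := by rw [hTX_star]
    _ = (X * T * X) * T := by simp only [mul_assoc]
    _ = X * T := by rw [h2]
  -- X * T absorbs squares
  have hA2Q : (adjoint T * T) * (X * T) = adjoint T * T := by
    calc (adjoint T * T) * (X * T) = adjoint T * (T * X * T) := by simp only [mul_assoc]
    _ = adjoint T * T := by rw [h1]
  have hQA2 : (X * T) * (adjoint T * T) = adjoint T * T := by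
    have h := congrArg star hA2Q
    rwa [star_mul, hQsa.star_eq, hsaTT.star_eq] at h
  have hQB2 : (X * T) * (X * adjoint X) = X * adjoint X := by
    calc (X * T) * (X * adjoint X) = (X * T * X) * adjoint X := by simp only [mul_assoc]
    _ = X * adjoint X := by rw [h2]
  have hB2Q : (X * adjoint X) * (X * T) = X * adjoint X := by
    have h := congrArg star hQB2
    rwa [star_mul, hQsa.star_eq, hsaXX.star_eq] at h
  -- commutation
  have hQA : Commute (X * T) A := by
    apply commute_absOp
    rw [Commute, SemiconjBy, hQA2, hA2Q]
  have hQB : Commute (X * T) B := by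
    apply commute_absOp
    rw [Commute, SemiconjBy, adjoint_adjoint, hQB2, hB2Q]
  have hB2A : Commute (B * B) A := by
    apply commute_absOp
    rw [Commute, SemiconjBy, hB2, hB2A2, hA2B2]
  have hAB : Commute A B := by
    have h : Commute A (X * adjoint X) := by
      rw [← hB2]
      exact hB2A.symm
    apply commute_absOp
    rwa [adjoint_adjoint]
  -- (X * T) * A = A
  have hQAeq : (X * T) * A = A := by
    apply nonneg_sq_eq _ _ _ hAnn
    · calc (X * T) * A * ((X * T) * A) = (X * T) * (A * (X * T)) * A := by simp only [mul_assoc]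
      _ = (X * T) * ((X * T) * A) * A := by rw [hQA.eq]
      _ = ((X * T) * (X * T)) * (A * A) := by simp only [mul_assoc]
      _ = (X * T) * (A * A) := by rw [hQidem]
      _ = A * A := by rw [hA2, hQA2]
    · have e : (X * T) * A = star (X * T) * A * (X * T) := by
        rw [hQsa.star_eq]
        calc (X * T) * A = ((X * T) * (X * T)) * A := by rw [hQidem]
        _ = (X * T) * ((X * T) * A) := by simp only [mul_assoc]
        _ = (X * T) * (A * (X * T)) := by rw [hQA.eq]
        _ = (X * T) * A * (X * T) := by simp only [mul_assoc]
      rw [e]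
      exact star_left_conjugate_nonneg hAnn (X * T)
  have hQBeq : (X * T) * B = B := by
    apply nonneg_sq_eq _ _ _ hBnn
    · calc (X * T) * B * ((X * T) * B) = (X * T) * (B * (X * T)) * B := by simp only [mul_assoc]
      _ = (X * T) * ((X * T) * B) * B := by rw [hQB.eq]
      _ = ((X * T) * (X * T)) * (B * B) := by simp only [mul_assoc]
      _ = (X * T) * (B * B) := by rw [hQidem]
      _ = B * B := by rw [hB2, hQB2]
    · have e : (X * T) * B = star (X * T) * B * (X * T) := by
        rw [hQsa.star_eq]
        calc (X * T) * B = ((X * T) * (X * T)) * B := by rw [hQidem]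
        _ = (X * T) * ((X * T) * B) := by simp only [mul_assoc]
        _ = (X * T) * (B * (X * T)) := by rw [hQB.eq]
        _ = (X * T) * B * (X * T) := by simp only [mul_assoc]
      rw [e]
      exact star_left_conjugate_nonneg hBnn (X * T)
  -- A * B = X * T
  have hABeq : A * B = X * T := by
    apply nonneg_sq_eq _ _ (mul_nonneg_of_commute A B hAnn hBnn hAB) hQnn
    calc A * B * (A * B) = A * ((B * A) * B) := by simp only [mul_assoc]
    _ = A * ((A * B) * B) := by rw [hAB.eq]
    _ = (A * A) * (B * B) := by simp only [mul_assoc]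
    _ = X * T := by rw [hA2, hB2, hA2B2]
    _ = (X * T) * (X * T) := hQidem.symm
  have hBAeq : B * A = X * T := by rw [← hAB.eq, hABeq]
  refine ⟨?_, ?_, ?_, ?_⟩
  · rw [hABeq, hQAeq]
  · rw [hBAeq, hQBeq]
  · rw [hABeq]; exact hQsa
  · rw [hBAeq]; exact hQsa

/-- If `X = T†`, then `|T|† = |(T†)^*|` and `|T^*|† = |T†|`. -/
theorem moorePenrose_absOp (T X : H →L[ℂ] H) (hX : IsMoorePenroseInv T X) :
    IsMoorePenroseInv (absOp T) (absOp (adjoint X)) ∧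
    IsMoorePenroseInv (absOp (adjoint T)) (absOp X) := by
  refine ⟨mp_abs T X hX, ?_⟩
  have h := mp_abs (adjoint T) (adjoint X) (mp_adjoint T X hX)
  rwa [adjoint_adjoint] at h
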